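/- The functions P_s^* satisfy the recursion: P_1^*(α) = (1/2)(α − z₁)² + ω₁(α) for all α ∈ ℝ, and for each s ∈ {2,…,n} and all α ∈ ℝ, P_s^*(α) = min{ P_{s−1}^*(α), min_{α′∈ℝ} P_{s−1}^*(α′) + λ₁ } + (1/2)(α − z_s)² + ω_s(α). -/

import Mathlib

open scoped Classical

/-- `h_s(y; z_{1:s})` (0-indexed: coordinates `0,…,s−1` of `y`,`z`,`l`,`u` play the role of
the paper's coordinates `1,…,s`): the objective of the fused ℓ₀ proximal subproblem
`(1/2)Σ_{j<s}(y_j−z_j)² + λ₁ Σ_{j<s−1}|y_j−y_{j+1}|₀ + Σ_{j<s} ω_j(y_j)`,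
with value `⊤` outside the box constraints. -/
noncomputable def hfun (lam1 lam2 : ℝ) (l u z : ℕ → ℝ) (s : ℕ) (y : ℕ → ℝ) : EReal :=
  if ∀ j ∈ Finset.range s, l j ≤ y j ∧ y j ≤ u j then
    ((((1 : ℝ) / 2) * ∑ j ∈ Finset.range s, (y j - z j) ^ 2
      + lam1 * ∑ j ∈ Finset.range (s - 1), (if y j = y (j + 1) then (0 : ℝ) else 1)
      + lam2 * ∑ j ∈ Finset.range s, (if y j = 0 then (0 : ℝ) else 1) : ℝ) : EReal)
  else ⊤

/-- `H(0) = −λ₁` and, for `s ≥ 1`, `H(s) = min_{y ∈ ℝˢ} h_s(y; z_{1:s})`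
(the minimum is attained; it equals the infimum). -/
noncomputable def Hfun (lam1 lam2 : ℝ) (l u z : ℕ → ℝ) : ℕ → EReal
  | 0 => ((-lam1 : ℝ) : EReal)
  | s + 1 => ⨅ y : ℕ → ℝ, hfun lam1 lam2 l u z (s + 1) y

/-- `P_s(i,α) = H(i) + (1/2)Σ_{j=i+1}^{s}(α−z_j)² + Σ_{j=i+1}^{s} ω_j(α) + λ₁`
(0-indexed: the sums run over `j ∈ [i, s)`). -/
noncomputable def Pfun (lam1 lam2 : ℝ) (l u z : ℕ → ℝ) (s i : ℕ) (α : ℝ) : EReal :=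
  Hfun lam1 lam2 l u z i +
    (if ∀ j ∈ Finset.Ico i s, l j ≤ α ∧ α ≤ u j then
      ((((1 : ℝ) / 2) * ∑ j ∈ Finset.Ico i s, (α - z j) ^ 2
        + lam2 * ((s - i : ℕ) : ℝ) * (if α = 0 then (0 : ℝ) else 1) + lam1 : ℝ) : EReal)
    else ⊤)

/-- `P_s^*(α) = min_{i ∈ {0,…,s−1}} P_s(i,α)`. -/
noncomputable def Pstar (lam1 lam2 : ℝ) (l u z : ℕ → ℝ) (s : ℕ) (α : ℝ) : EReal :=
  ⨅ i ∈ Finset.range s, Pfun lam1 lam2 l u z s i α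

/-! ### Auxiliary lemmas -/

private lemma ereal_iInf_add_coe {ι : Sort*} [Nonempty ι] (f : ι → EReal) (r : ℝ) :
    (⨅ i, f i) + (r : EReal) = ⨅ i, (f i + (r : EReal)) := by
  refine le_antisymm (le_iInf fun i => add_le_add_left (iInf_le _ i) _) ?_
  have h : (⨅ i, f i + (r : EReal)) + ((-r : ℝ) : EReal) ≤ ⨅ i, f i := by
    refine le_iInf fun i => ?_
    refine (add_le_add_left (iInf_le (fun i => f i + (r : EReal)) i) _).trans_eq ?_
    rw [EReal.coe_neg, ← sub_eq_add_neg, EReal.add_sub_cancel_right]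
  calc (⨅ i, f i + (r : EReal))
      = (⨅ i, f i + (r : EReal)) + ((-r : ℝ) : EReal) + (r : EReal) := by
        rw [EReal.coe_neg, ← sub_eq_add_neg, EReal.sub_add_cancel]
    _ ≤ (⨅ i, f i) + (r : EReal) := add_le_add_left h _

private lemma ereal_iInf_add {ι : Sort*} [Nonempty ι] (f : ι → EReal) (b : ℝ)
    (hf : ∀ i, (b : EReal) ≤ f i) (c : EReal) (hc : c ≠ ⊥) :
    (⨅ i, f i) + c = ⨅ i, (f i + c) := by
  induction c with
  | bot => exact absurd rfl hc
  | coe r => exact ereal_iInf_add_coe f r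
  | top =>
    have h1 : (⨅ i, f i) ≠ ⊥ :=
      ((EReal.bot_lt_coe b).trans_le (le_iInf hf)).ne'
    rw [EReal.add_top_of_ne_bot h1]
    exact (iInf_eq_top.mpr fun i => EReal.add_top_of_ne_bot
      ((EReal.bot_lt_coe b).trans_le (hf i)).ne').symm

private lemma ereal_min_add (x y c : EReal) : min x y + c = min (x + c) (y + c) := by
  rcases le_total x y with h | h
  · rw [min_eq_left h, min_eq_left (add_le_add_left h c)]
  · rw [min_eq_right h, min_eq_right (add_le_add_left h c)]

section aux

variable {lam1 lam2 : ℝ} {l u z : ℕ → ℝ}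

private lemma Hfun_zero : Hfun lam1 lam2 l u z 0 = ((-lam1 : ℝ) : EReal) := rfl

private lemma Hfun_succ (t : ℕ) :
    Hfun lam1 lam2 l u z (t + 1) = ⨅ y : ℕ → ℝ, hfun lam1 lam2 l u z (t + 1) y := rfl

private lemma ind_nonneg (a : ℝ) : (0 : ℝ) ≤ (if a = 0 then (0 : ℝ) else 1) := by
  split <;> norm_num

private lemma hfun_nonneg (h1 : 0 ≤ lam1) (h2 : 0 ≤ lam2) (s : ℕ) (y : ℕ → ℝ) :
    (0 : EReal) ≤ hfun lam1 lam2 l u z s y := by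
  unfold hfun; split
  · rw [← EReal.coe_zero, EReal.coe_le_coe_iff]
    have a1 : (0:ℝ) ≤ ∑ j ∈ Finset.range s, (y j - z j) ^ 2 :=
      Finset.sum_nonneg fun j _ => sq_nonneg _
    have a2 : (0:ℝ) ≤ ∑ j ∈ Finset.range (s-1), (if y j = y (j+1) then (0:ℝ) else 1) :=
      Finset.sum_nonneg fun j _ => by split <;> norm_num
    have a3 : (0:ℝ) ≤ ∑ j ∈ Finset.range s, (if y j = 0 then (0:ℝ) else 1) :=
      Finset.sum_nonneg fun j _ => by split <;> norm_num
    have := mul_nonneg h1 a2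
    have := mul_nonneg h2 a3
    nlinarith
  · exact le_top

private lemma Hfun_lb (h1 : 0 ≤ lam1) (h2 : 0 ≤ lam2) (i : ℕ) :
    ((-lam1 : ℝ) : EReal) ≤ Hfun lam1 lam2 l u z i := by
  cases i with
  | zero => exact le_refl _
  | succ t =>
    refine le_trans ?_ (le_iInf fun y => hfun_nonneg h1 h2 (t+1) y)
    rw [← EReal.coe_zero, EReal.coe_le_coe_iff]; linarith

private lemma Hfun_ne_bot (h1 : 0 ≤ lam1) (h2 : 0 ≤ lam2) (i : ℕ) :
    Hfun lam1 lam2 l u z i ≠ ⊥ :=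
  ((EReal.bot_lt_coe _).trans_le (Hfun_lb h1 h2 i)).ne'

private lemma Pfun_lb (h1 : 0 ≤ lam1) (h2 : 0 ≤ lam2) (s i : ℕ) (α : ℝ) :
    ((-lam1 : ℝ) : EReal) ≤ Pfun lam1 lam2 l u z s i α := by
  have htail : (0 : EReal) ≤
      (if ∀ j ∈ Finset.Ico i s, l j ≤ α ∧ α ≤ u j then
        ((((1 : ℝ) / 2) * ∑ j ∈ Finset.Ico i s, (α - z j) ^ 2
          + lam2 * ((s - i : ℕ) : ℝ) * (if α = 0 then (0 : ℝ) else 1) + lam1 : ℝ) : EReal)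
      else ⊤) := by
    split
    · rw [← EReal.coe_zero, EReal.coe_le_coe_iff]
      have a1 : (0:ℝ) ≤ ∑ j ∈ Finset.Ico i s, (α - z j) ^ 2 :=
        Finset.sum_nonneg fun j _ => sq_nonneg _
      have a2 := ind_nonneg α
      have h3 : (0:ℝ) ≤ ((s - i : ℕ) : ℝ) := Nat.cast_nonneg _
      have h4 := mul_nonneg (mul_nonneg h2 h3) a2
      linarith
    · exact le_top
  calc ((-lam1 : ℝ) : EReal) ≤ Hfun lam1 lam2 l u z i := Hfun_lb h1 h2 i
    _ = Hfun lam1 lam2 l u z i + 0 := (add_zero _).symm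
    _ ≤ Pfun lam1 lam2 l u z s i α := add_le_add_right htail _

/-- Lemma A : `H(s) ≤ P_s(i, α)` for `i < s`. -/
private lemma Hfun_le_Pfun (h1 : 0 ≤ lam1) (h2 : 0 ≤ lam2) (t i : ℕ) (hi : i < t + 1)
    (α : ℝ) : Hfun lam1 lam2 l u z (t + 1) ≤ Pfun lam1 lam2 l u z (t + 1) i α := by
  unfold Pfun
  by_cases hbox : ∀ j ∈ Finset.Ico i (t+1), l j ≤ α ∧ α ≤ u j
  · rw [if_pos hbox]
    cases i with
    | zero =>
      rw [Hfun_zero, ← EReal.coe_add, Hfun_succ]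
      refine (iInf_le _ (fun _ => α)).trans ?_
      unfold hfun
      have hb : ∀ j ∈ Finset.range (t+1), l j ≤ α ∧ α ≤ u j := by
        intro j hj
        exact hbox j (by simpa [Finset.mem_Ico] using Finset.mem_range.mp hj)
      rw [if_pos hb, EReal.coe_le_coe_iff]
      have e1 : ∑ j ∈ Finset.range (t+1-1), (if α = α then (0:ℝ) else 1) = 0 :=
        Finset.sum_eq_zero fun j _ => by simp
      have e2 : ∑ j ∈ Finset.range (t+1), (if α = 0 then (0:ℝ) else 1)
          = ((t+1 : ℕ) : ℝ) * (if α = 0 then (0:ℝ) else 1) := by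
        rw [Finset.sum_const, Finset.card_range, nsmul_eq_mul]
      have e3 : ∑ j ∈ Finset.Ico 0 (t+1), (α - z j) ^ 2
          = ∑ j ∈ Finset.range (t+1), (α - z j) ^ 2 := by
        rw [Finset.range_eq_Ico]
      rw [e1, e2, ← e3]
      have : ((t + 1 - 0 : ℕ) : ℝ) = ((t+1 : ℕ) : ℝ) := by norm_num
      rw [this]
      exact le_of_eq (by ring)
    | succ i' =>
      rw [Hfun_succ, Hfun_succ, ereal_iInf_add_coe]
      refine le_iInf fun y' => ?_
      by_cases hb' : ∀ j ∈ Finset.range (i'+1), l j ≤ y' j ∧ y' j ≤ u j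
      · set y : ℕ → ℝ := fun j => if j < i'+1 then y' j else α with hy
        have hyi : ∀ j, j < i'+1 → y j = y' j := fun j hj => by simp only [hy]; exact if_pos hj
        have hya : ∀ j, i'+1 ≤ j → y j = α := fun j hj => by
          simp only [hy]; exact if_neg (by omega)
        have hbox2 : ∀ j ∈ Finset.range (t+1), l j ≤ y j ∧ y j ≤ u j := by
          intro j hj
          rcases Nat.lt_or_ge j (i'+1) with h | h
          · rw [hyi j h]; exact hb' j (Finset.mem_range.mpr h)
          · rw [hya j h]
            exact hbox j (Finset.mem_Ico.mpr ⟨h, Finset.mem_range.mp hj⟩)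
        refine (iInf_le _ y).trans ?_
        unfold hfun
        rw [if_pos hbox2, if_pos hb', ← EReal.coe_add, EReal.coe_le_coe_iff]
        have hile : i' + 1 ≤ t + 1 := hi.le
        have hilt : i' < t := by omega
        -- squares
        have e1 : ∑ j ∈ Finset.range (t+1), (y j - z j) ^ 2
            = ∑ j ∈ Finset.range (i'+1), (y' j - z j) ^ 2
              + ∑ j ∈ Finset.Ico (i'+1) (t+1), (α - z j) ^ 2 := by
          rw [← Finset.sum_range_add_sum_Ico _ hile]
          congr 1
          · exact Finset.sum_congr rfl fun j hj => by
              rw [hyi j (Finset.mem_range.mp hj)]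
          · exact Finset.sum_congr rfl fun j hj => by
              rw [hya j (Finset.mem_Ico.mp hj).1]
        -- indicators
        have e2 : ∑ j ∈ Finset.range (t+1), (if y j = 0 then (0:ℝ) else 1)
            = ∑ j ∈ Finset.range (i'+1), (if y' j = 0 then (0:ℝ) else 1)
              + ((t + 1 - (i'+1) : ℕ) : ℝ) * (if α = 0 then (0:ℝ) else 1) := by
          rw [← Finset.sum_range_add_sum_Ico _ hile]
          congr 1
          · exact Finset.sum_congr rfl fun j hj => by
              rw [hyi j (Finset.mem_range.mp hj)]
          · rw [Finset.sum_congr rfl fun j hj =>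
              (by rw [hya j (Finset.mem_Ico.mp hj).1] :
                (if y j = 0 then (0:ℝ) else 1) = (if α = 0 then (0:ℝ) else 1))]
            rw [Finset.sum_const, Nat.card_Ico, nsmul_eq_mul]
        -- jumps
        have e3 : ∑ j ∈ Finset.range (t+1-1), (if y j = y (j+1) then (0:ℝ) else 1)
            ≤ ∑ j ∈ Finset.range (i'+1-1), (if y' j = y' (j+1) then (0:ℝ) else 1) + 1 := by
          simp only [Nat.add_sub_cancel]
          rw [← Finset.sum_range_add_sum_Ico _ (le_of_lt hilt)]
          have j1 : ∑ j ∈ Finset.range i', (if y j = y (j+1) then (0:ℝ) else 1)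
              = ∑ j ∈ Finset.range i', (if y' j = y' (j+1) then (0:ℝ) else 1) :=
            Finset.sum_congr rfl fun j hj => by
              have hj' := Finset.mem_range.mp hj
              rw [hyi j (by omega), hyi (j+1) (by omega)]
          have j2 : ∑ j ∈ Finset.Ico i' t, (if y j = y (j+1) then (0:ℝ) else 1) ≤ 1 := by
            rw [Finset.sum_eq_sum_Ico_succ_bot hilt]
            have j3 : ∑ j ∈ Finset.Ico (i'+1) t, (if y j = y (j+1) then (0:ℝ) else 1) = 0 :=
              Finset.sum_eq_zero fun j hj => by
                have hj' := (Finset.mem_Ico.mp hj).1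
                rw [hya j hj', hya (j+1) (by omega)]; simp
            rw [j3]
            split <;> norm_num
          linarith
        rw [e1, e2]
        have := mul_le_mul_of_nonneg_left e3 h1
        have := ind_nonneg α
        nlinarith
      · have : hfun lam1 lam2 l u z (i'+1) y' = ⊤ := by
          unfold hfun; rw [if_neg hb']
        rw [this, EReal.top_add_coe]
        exact le_top
  · rw [if_neg hbox, EReal.add_top_of_ne_bot (Hfun_ne_bot h1 h2 i)]
    exact le_top

/-- Lemma B : `⨅ α, P_s^*(α) ≤ h_s(y)`. -/
private lemma iInfPstar_le_hfun (h1 : 0 ≤ lam1) (h2 : 0 ≤ lam2) (t : ℕ) (y : ℕ → ℝ) :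
    (⨅ α : ℝ, Pstar lam1 lam2 l u z (t + 1) α) ≤ hfun lam1 lam2 l u z (t + 1) y := by
  by_cases hbox : ∀ j ∈ Finset.range (t+1), l j ≤ y j ∧ y j ≤ u j
  · set α := y t with hα
    have hex : ∃ j, ∀ k, j ≤ k → k ≤ t → y k = α :=
      ⟨t, fun k hk1 hk2 => by rw [le_antisymm hk2 hk1]⟩
    obtain ⟨i, hi, hmin⟩ : ∃ i, (∀ k, i ≤ k → k ≤ t → y k = α) ∧
        (∀ m < i, ¬ ∀ k, m ≤ k → k ≤ t → y k = α) :=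
      ⟨Nat.find hex, Nat.find_spec hex, fun m hm => Nat.find_min hex hm⟩
    have hile : i ≤ t := by
      by_contra hcon
      exact hmin t (by omega) fun k hk1 hk2 => by rw [le_antisymm hk2 hk1]
    have key : Pfun lam1 lam2 l u z (t+1) i α ≤ hfun lam1 lam2 l u z (t+1) y := by
      have hpbox : ∀ j ∈ Finset.Ico i (t+1), l j ≤ α ∧ α ≤ u j := by
        intro j hj
        obtain ⟨hj1, hj2⟩ := Finset.mem_Ico.mp hj
        rw [← hi j hj1 (by omega)]
        exact hbox j (Finset.mem_range.mpr hj2)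
      have hval : hfun lam1 lam2 l u z (t+1) y =
          ((((1 : ℝ) / 2) * ∑ j ∈ Finset.range (t+1), (y j - z j) ^ 2
            + lam1 * ∑ j ∈ Finset.range (t+1-1), (if y j = y (j+1) then (0:ℝ) else 1)
            + lam2 * ∑ j ∈ Finset.range (t+1), (if y j = 0 then (0:ℝ) else 1) : ℝ) : EReal) := by
        unfold hfun; rw [if_pos hbox]
      unfold Pfun
      rw [if_pos hpbox, hval]
      have e1 : ∑ j ∈ Finset.range (t+1), (y j - z j) ^ 2
          = ∑ j ∈ Finset.range i, (y j - z j) ^ 2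
            + ∑ j ∈ Finset.Ico i (t+1), (α - z j) ^ 2 := by
        rw [← Finset.sum_range_add_sum_Ico _ (show i ≤ t+1 by omega)]
        congr 1
        exact Finset.sum_congr rfl fun j hj => by
          obtain ⟨hj1, hj2⟩ := Finset.mem_Ico.mp hj
          rw [hi j hj1 (by omega)]
      have e2 : ∑ j ∈ Finset.range (t+1), (if y j = 0 then (0:ℝ) else 1)
          = ∑ j ∈ Finset.range i, (if y j = 0 then (0:ℝ) else 1)
            + ((t + 1 - i : ℕ) : ℝ) * (if α = 0 then (0:ℝ) else 1) := by
        rw [← Finset.sum_range_add_sum_Ico _ (show i ≤ t+1 by omega)]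
        congr 1
        rw [Finset.sum_congr rfl fun j hj =>
          (by
            obtain ⟨hj1, hj2⟩ := Finset.mem_Ico.mp hj
            rw [hi j hj1 (by omega)] :
            (if y j = 0 then (0:ℝ) else 1) = (if α = 0 then (0:ℝ) else 1))]
        rw [Finset.sum_const, Nat.card_Ico, nsmul_eq_mul]
      have hnn : (0:ℝ) ≤ ∑ j ∈ Finset.range (t+1-1), (if y j = y (j+1) then (0:ℝ) else 1) :=
        Finset.sum_nonneg fun j _ => by split <;> norm_num
      cases i with
      | zero =>
        rw [Hfun_zero, ← EReal.coe_add, EReal.coe_le_coe_iff]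
        rw [e1, e2]
        simp only [Finset.range_zero, Finset.sum_empty, zero_add]
        have := mul_nonneg h1 hnn
        linarith
      | succ i'' =>
        have hne : y i'' ≠ α := by
          have hm : ¬ ∀ k, i'' ≤ k → k ≤ t → y k = α := hmin i'' (by omega)
          intro hcon
          apply hm
          intro k hk1 hk2
          rcases Nat.lt_or_ge k (i''+1) with hk | hk
          · have : k = i'' := by omega
            rw [this]; exact hcon
          · exact hi k hk hk2
        have hyi : y (i''+1) = α := hi (i''+1) (by omega) (by omega)
        have hjump : (if y i'' = y (i''+1) then (0:ℝ) else 1) = 1 := by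
          rw [hyi, if_neg hne]
        have hHle : Hfun lam1 lam2 l u z (i''+1) ≤
            ((((1 : ℝ) / 2) * ∑ j ∈ Finset.range (i''+1), (y j - z j) ^ 2
              + lam1 * ∑ j ∈ Finset.range i'', (if y j = y (j+1) then (0:ℝ) else 1)
              + lam2 * ∑ j ∈ Finset.range (i''+1), (if y j = 0 then (0:ℝ) else 1) : ℝ)
              : EReal) := by
          rw [Hfun_succ]
          refine (iInf_le _ y).trans ?_
          unfold hfun
          rw [if_pos (fun j hj => hbox j (Finset.mem_range.mpr
            (by have := Finset.mem_range.mp hj; omega)))]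
          simp only [Nat.add_sub_cancel]
          exact le_refl _
        refine le_trans (add_le_add_left hHle _) ?_
        rw [← EReal.coe_add, EReal.coe_le_coe_iff]
        have e3 : ∑ j ∈ Finset.range i'', (if y j = y (j+1) then (0:ℝ) else 1) + 1
            ≤ ∑ j ∈ Finset.range (t+1-1), (if y j = y (j+1) then (0:ℝ) else 1) := by
          simp only [Nat.add_sub_cancel]
          have hi''t : i'' < t := by omega
          rw [← Finset.sum_range_add_sum_Ico
            (fun j => (if y j = y (j+1) then (0:ℝ) else 1)) (le_of_lt hi''t)]
          rw [Finset.sum_eq_sum_Ico_succ_bot hi''t, hjump]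
          have hnn2 : (0:ℝ) ≤ ∑ j ∈ Finset.Ico (i''+1) t,
              (if y j = y (j+1) then (0:ℝ) else 1) :=
            Finset.sum_nonneg fun j _ => by split <;> norm_num
          linarith
        rw [e1, e2]
        have := mul_le_mul_of_nonneg_left e3 h1
        linarith
    refine (iInf_le _ α).trans ?_
    unfold Pstar
    exact le_trans (iInf₂_le i (Finset.mem_range.mpr (by omega))) key
  · unfold hfun; rw [if_neg hbox]; exact le_top

/-- Key lemma : `H(s) = ⨅ α, P_s^*(α)` for `s ≥ 1`. -/
private lemma Hfun_eq_iInf_Pstar (h1 : 0 ≤ lam1) (h2 : 0 ≤ lam2) (t : ℕ) :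
    Hfun lam1 lam2 l u z (t + 1) = ⨅ α : ℝ, Pstar lam1 lam2 l u z (t + 1) α := by
  refine le_antisymm ?_ ?_
  · refine le_iInf fun α => ?_
    unfold Pstar
    exact le_iInf fun i => le_iInf fun hi =>
      Hfun_le_Pfun h1 h2 t i (Finset.mem_range.mp hi) α
  · rw [Hfun_succ]
    exact le_iInf fun y => iInfPstar_le_hfun h1 h2 t y

/-- Lemma C : step identity for `i < t`. -/
private lemma Pfun_succ_eq (h1 : 0 ≤ lam1) (h2 : 0 ≤ lam2) (t i : ℕ) (hi : i < t) (α : ℝ) :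
    Pfun lam1 lam2 l u z (t + 1) i α =
      Pfun lam1 lam2 l u z t i α +
        (if l t ≤ α ∧ α ≤ u t then
          ((((1 : ℝ) / 2) * (α - z t) ^ 2
            + lam2 * (if α = 0 then (0 : ℝ) else 1) : ℝ) : EReal)
        else ⊤) := by
  have hHb := Hfun_ne_bot (l := l) (u := u) (z := z) h1 h2 i
  unfold Pfun
  by_cases b1 : ∀ j ∈ Finset.Ico i t, l j ≤ α ∧ α ≤ u j
  · by_cases b2 : l t ≤ α ∧ α ≤ u t
    · have bb : ∀ j ∈ Finset.Ico i (t+1), l j ≤ α ∧ α ≤ u j := by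
        intro j hj
        obtain ⟨hj1, hj2⟩ := Finset.mem_Ico.mp hj
        rcases Nat.lt_or_ge j t with h | h
        · exact b1 j (Finset.mem_Ico.mpr ⟨hj1, h⟩)
        · have : j = t := by omega
          rw [this]; exact b2
      rw [if_pos bb, if_pos b1, if_pos b2]
      conv_rhs => rw [add_assoc, ← EReal.coe_add]
      congr 1
      rw [EReal.coe_eq_coe_iff]
      rw [Finset.sum_Ico_succ_top (by omega : i ≤ t)]
      have : ((t + 1 - i : ℕ) : ℝ) = ((t - i : ℕ) : ℝ) + 1 := by
        have : t + 1 - i = (t - i) + 1 := by omega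
        rw [this]; push_cast; ring
      rw [this]; ring
    · have bb : ¬ ∀ j ∈ Finset.Ico i (t+1), l j ≤ α ∧ α ≤ u j := by
        intro hcon
        exact b2 (hcon t (Finset.mem_Ico.mpr ⟨by omega, by omega⟩))
      rw [if_neg bb, if_pos b1, if_neg b2, EReal.add_top_of_ne_bot hHb,
        EReal.add_top_of_ne_bot (show Hfun lam1 lam2 l u z i
            + ((((1 : ℝ) / 2) * ∑ j ∈ Finset.Ico i t, (α - z j) ^ 2
              + lam2 * ((t - i : ℕ) : ℝ) * (if α = 0 then (0 : ℝ) else 1) + lam1 : ℝ)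
              : EReal) ≠ ⊥ by
          rw [Ne, EReal.add_eq_bot_iff]
          push_neg
          exact ⟨hHb, EReal.coe_ne_bot _⟩)]
  · have bb : ¬ ∀ j ∈ Finset.Ico i (t+1), l j ≤ α ∧ α ≤ u j := by
      intro hcon
      refine b1 fun j hj => ?_
      obtain ⟨hj1, hj2⟩ := Finset.mem_Ico.mp hj
      exact hcon j (Finset.mem_Ico.mpr ⟨hj1, by omega⟩)
    rw [if_neg bb, if_neg b1, EReal.add_top_of_ne_bot hHb]
    have : (if l t ≤ α ∧ α ≤ u t then
        ((((1 : ℝ) / 2) * (α - z t) ^ 2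
          + lam2 * (if α = 0 then (0 : ℝ) else 1) : ℝ) : EReal) else ⊤) ≠ ⊥ := by
      split
      · exact EReal.coe_ne_bot _
      · exact top_ne_bot
    rw [EReal.top_add_of_ne_bot this]

/-- Lemma D : the last index. -/
private lemma Pfun_last_eq (h1 : 0 ≤ lam1) (h2 : 0 ≤ lam2) (t : ℕ) (α : ℝ) :
    Pfun lam1 lam2 l u z (t + 1) t α =
      (Hfun lam1 lam2 l u z t + ((lam1 : ℝ) : EReal)) +
        (if l t ≤ α ∧ α ≤ u t then
          ((((1 : ℝ) / 2) * (α - z t) ^ 2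
            + lam2 * (if α = 0 then (0 : ℝ) else 1) : ℝ) : EReal)
        else ⊤) := by
  have hHb := Hfun_ne_bot (l := l) (u := u) (z := z) h1 h2 t
  unfold Pfun
  by_cases b2 : l t ≤ α ∧ α ≤ u t
  · have bb : ∀ j ∈ Finset.Ico t (t+1), l j ≤ α ∧ α ≤ u j := by
      intro j hj
      obtain ⟨hj1, hj2⟩ := Finset.mem_Ico.mp hj
      have : j = t := by omega
      rw [this]; exact b2
    rw [if_pos bb, if_pos b2]
    conv_rhs => rw [add_assoc, ← EReal.coe_add]
    congr 1
    rw [EReal.coe_eq_coe_iff]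
    rw [Nat.Ico_succ_singleton, Finset.sum_singleton]
    have : ((t + 1 - t : ℕ) : ℝ) = 1 := by
      have : t + 1 - t = 1 := by omega
      rw [this]; norm_num
    rw [this]; ring
  · have bb : ¬ ∀ j ∈ Finset.Ico t (t+1), l j ≤ α ∧ α ≤ u j := by
      intro hcon
      exact b2 (hcon t (Finset.mem_Ico.mpr ⟨le_refl t, by omega⟩))
    rw [if_neg bb, if_neg b2, EReal.add_top_of_ne_bot hHb,
      EReal.add_top_of_ne_bot (by
        rw [Ne, EReal.add_eq_bot_iff]
        push_neg
        exact ⟨hHb, EReal.coe_ne_bot _⟩)]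

end aux

/-- the recursion for `P_s^*` (0-indexed: the paper's `z_1, ω_1` are `z 0, ω 0`,
and the paper's `z_s, ω_s` are `z (s−1), ω (s−1)`):
`P_1^*(α) = (1/2)(α − z₁)² + ω₁(α)` and, for `s ∈ {2,…,n}`,
`P_s^*(α) = min{P_{s−1}^*(α), min_{α′} P_{s−1}^*(α′) + λ₁} + (1/2)(α − z_s)² + ω_s(α)`. -/
theorem stmt5 (n : ℕ) (hn : 1 ≤ n) (lam1 lam2 : ℝ) (hlam1 : 0 < lam1) (hlam2 : 0 < lam2)
    (l u z : ℕ → ℝ) (hlu : ∀ i < n, l i ≤ 0 ∧ 0 ≤ u i) :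
    (∀ α : ℝ, Pstar lam1 lam2 l u z 1 α =
      (if l 0 ≤ α ∧ α ≤ u 0 then
        ((((1 : ℝ) / 2) * (α - z 0) ^ 2 + lam2 * (if α = 0 then (0 : ℝ) else 1) : ℝ) : EReal)
      else ⊤)) ∧
    (∀ s : ℕ, 2 ≤ s → s ≤ n → ∀ α : ℝ,
      Pstar lam1 lam2 l u z s α =
        min (Pstar lam1 lam2 l u z (s - 1) α)
            ((⨅ α' : ℝ, Pstar lam1 lam2 l u z (s - 1) α') + ((lam1 : ℝ) : EReal)) +
        (if l (s - 1) ≤ α ∧ α ≤ u (s - 1) then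
          ((((1 : ℝ) / 2) * (α - z (s - 1)) ^ 2
            + lam2 * (if α = 0 then (0 : ℝ) else 1) : ℝ) : EReal)
        else ⊤)) := by
  have h1 : (0:ℝ) ≤ lam1 := hlam1.le
  have h2 : (0:ℝ) ≤ lam2 := hlam2.le
  constructor
  · intro α
    have hsingle : Pstar lam1 lam2 l u z 1 α = Pfun lam1 lam2 l u z 1 0 α := by
      unfold Pstar
      simp [Finset.range_one]
    rw [hsingle]
    unfold Pfun
    by_cases b : l 0 ≤ α ∧ α ≤ u 0
    · have bb : ∀ j ∈ Finset.Ico 0 1, l j ≤ α ∧ α ≤ u j := by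
        intro j hj
        obtain ⟨_, hj2⟩ := Finset.mem_Ico.mp hj
        have : j = 0 := by omega
        rw [this]; exact b
      rw [if_pos bb, if_pos b, Hfun_zero, ← EReal.coe_add]
      congr 1
      rw [show Finset.Ico 0 1 = {0} from rfl, Finset.sum_singleton]
      norm_num
    · have bb : ¬ ∀ j ∈ Finset.Ico 0 1, l j ≤ α ∧ α ≤ u j := by
        intro hcon
        exact b (hcon 0 (by simp))
      rw [if_neg bb, if_neg b, Hfun_zero, EReal.add_top_of_ne_bot (EReal.coe_ne_bot _)]
  · intro s hs2 hsn α
    obtain ⟨t, rfl⟩ : ∃ t, s = t + 1 := ⟨s - 1, by omega⟩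
    have ht : 1 ≤ t := by omega
    simp only [Nat.add_sub_cancel]
    set ω : EReal := (if l t ≤ α ∧ α ≤ u t then
        ((((1 : ℝ) / 2) * (α - z t) ^ 2
          + lam2 * (if α = 0 then (0 : ℝ) else 1) : ℝ) : EReal)
      else ⊤) with hω
    have hωbot : ω ≠ ⊥ := by
      rw [hω]; split
      · exact EReal.coe_ne_bot _
      · exact top_ne_bot
    have hPstar : Pstar lam1 lam2 l u z (t+1) α
        = Pfun lam1 lam2 l u z (t+1) t α ⊓ ⨅ i ∈ Finset.range t, Pfun lam1 lam2 l u z (t+1) i α := by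
      unfold Pstar
      rw [Finset.range_add_one, Finset.iInf_insert]
    rw [hPstar]
    have hcongr : (⨅ i ∈ Finset.range t, Pfun lam1 lam2 l u z (t+1) i α)
        = ⨅ i ∈ Finset.range t, (Pfun lam1 lam2 l u z t i α + ω) :=
      iInf_congr fun i => iInf_congr fun hi =>
        Pfun_succ_eq h1 h2 t i (Finset.mem_range.mp hi) α
    have hdist : (⨅ i ∈ Finset.range t, (Pfun lam1 lam2 l u z t i α + ω))
        = Pstar lam1 lam2 l u z t α + ω := by
      unfold Pstar
      rw [iInf_subtype', iInf_subtype']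
      haveI : Nonempty {i // i ∈ Finset.range t} :=
        ⟨⟨0, Finset.mem_range.mpr (by omega)⟩⟩
      exact (ereal_iInf_add (fun x : {i // i ∈ Finset.range t} =>
        Pfun lam1 lam2 l u z t x α) (-lam1)
        (fun x => Pfun_lb h1 h2 t x α) ω hωbot).symm
    rw [hcongr, hdist, Pfun_last_eq h1 h2 t α, ← hω]
    obtain ⟨t', rfl⟩ : ∃ t', t = t' + 1 := ⟨t - 1, by omega⟩
    rw [Hfun_eq_iInf_Pstar h1 h2 t']
    rw [ereal_min_add, min_comm]
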